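/- Let C be the unique root in (0,∞) of h(c) = 2∫₀^c e^{t²/2} dt − c·e^{c²/2}, and let B = C² / (∫₀^C e^{t²/2} dt). Then the function f(y) = (B/y)∫₀^y e^{t²/2} dt satisfies f(y) ≥ y for all y ∈ (0,C]. -/

import Mathlib

open Real

private lemma cont_exp_sq : Continuous (fun t : ℝ => Real.exp (t ^ 2 / 2)) := by
  continuity

private lemma I_hasDeriv (y : ℝ) :
    HasDerivAt (fun u : ℝ => ∫ t in (0:ℝ)..u, Real.exp (t ^ 2 / 2)) (Real.exp (y ^ 2 / 2)) y :=
  intervalIntegral.integral_hasDerivAt_right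
    (cont_exp_sq.intervalIntegrable _ _)
    cont_exp_sq.aestronglyMeasurable.stronglyMeasurableAtFilter
    cont_exp_sq.continuousAt

private lemma h_hasDeriv (y : ℝ) :
    HasDerivAt (fun u : ℝ => 2 * (∫ t in (0:ℝ)..u, Real.exp (t ^ 2 / 2)) - u * Real.exp (u ^ 2 / 2))
      (Real.exp (y ^ 2 / 2) * (1 - y ^ 2)) y := by
  have h1 : HasDerivAt (fun u : ℝ => 2 * (∫ t in (0:ℝ)..u, Real.exp (t ^ 2 / 2)))
      (2 * Real.exp (y ^ 2 / 2)) y := (I_hasDeriv y).const_mul 2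
  have h2 : HasDerivAt (fun u : ℝ => Real.exp (u ^ 2 / 2)) (Real.exp (y ^ 2 / 2) * y) y := by
    have : HasDerivAt (fun u : ℝ => u ^ 2 / 2) (y) y := by
      have := ((hasDerivAt_pow 2 y).div_const 2)
      simpa using this
    exact (Real.hasDerivAt_exp (y ^ 2 / 2)).comp y this
  have h3 : HasDerivAt (fun u : ℝ => u * Real.exp (u ^ 2 / 2))
      (1 * Real.exp (y ^ 2 / 2) + y * (Real.exp (y ^ 2 / 2) * y)) y :=
    (hasDerivAt_id y).mul h2
  have := h1.sub h3
  exact this.congr_deriv (by ring)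

/-- Let `C` be the unique positive root of `h(c) = 2∫₀^c e^{t²/2} dt − c·e^{c²/2}` and
`B = C²/∫₀^C e^{t²/2} dt`. Then `f(y) = (B/y)∫₀^y e^{t²/2} dt` satisfies `f(y) ≥ y`
for all `y ∈ (0,C]`. -/
theorem stmt_4 (C B : ℝ) (hCpos : 0 < C)
    (hCroot : 2 * (∫ t in (0:ℝ)..C, Real.exp (t ^ 2 / 2)) - C * Real.exp (C ^ 2 / 2) = 0)
    (hCuniq : ∀ c : ℝ, 0 < c →
      2 * (∫ t in (0:ℝ)..c, Real.exp (t ^ 2 / 2)) - c * Real.exp (c ^ 2 / 2) = 0 → c = C)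
    (hB : B = C ^ 2 / ∫ t in (0:ℝ)..C, Real.exp (t ^ 2 / 2))
    (f : ℝ → ℝ)
    (hf : ∀ y : ℝ, f y = (B / y) * ∫ t in (0:ℝ)..y, Real.exp (t ^ 2 / 2)) :
    ∀ y ∈ Set.Ioc (0:ℝ) C, y ≤ f y := by
  set I : ℝ → ℝ := fun u => ∫ t in (0:ℝ)..u, Real.exp (t ^ 2 / 2) with hI
  set h : ℝ → ℝ := fun u => 2 * I u - u * Real.exp (u ^ 2 / 2) with hh
  have h_cont : Continuous h := by
    have : Continuous I := by
      exact intervalIntegral.continuous_primitive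
        (fun a b => cont_exp_sq.intervalIntegrable a b) 0
    fun_prop
  have h0 : h 0 = 0 := by simp [hh, hI]
  have hC0 : h C = 0 := hCroot
  -- C > 1
  have hC1 : 1 < C := by
    by_contra hle
    push_neg at hle
    have hmono : StrictMonoOn h (Set.Icc 0 C) := by
      apply strictMonoOn_of_deriv_pos (convex_Icc 0 C) h_cont.continuousOn
      intro x hx
      rw [interior_Icc] at hx
      rw [(h_hasDeriv x).deriv]
      have hx2 : x ^ 2 < 1 := by
        have : x < 1 := lt_of_lt_of_le hx.2 hle
        nlinarith [hx.1]
      nlinarith [Real.exp_pos (x ^ 2 / 2), hx2]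
    have := hmono (Set.left_mem_Icc.2 hCpos.le) (Set.right_mem_Icc.2 hCpos.le) hCpos
    rw [h0, hC0] at this
    exact lt_irrefl 0 this
  -- h ≥ 0 on [0, C]
  have h_nonneg : ∀ y ∈ Set.Icc (0:ℝ) C, 0 ≤ h y := by
    intro y hy
    rcases le_total y 1 with hy1 | hy1
    · -- monotone on [0,1]
      have hmono : MonotoneOn h (Set.Icc (0:ℝ) 1) := by
        apply monotoneOn_of_hasDerivWithinAt_nonneg (convex_Icc 0 1) h_cont.continuousOn
          (f' := fun x => Real.exp (x ^ 2 / 2) * (1 - x ^ 2))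
        · intro x _; exact (h_hasDeriv x).hasDerivWithinAt
        · intro x hx
          rw [interior_Icc] at hx
          have : x ^ 2 ≤ 1 := by nlinarith [hx.1, hx.2]
          have := Real.exp_pos (x ^ 2 / 2)
          nlinarith
      have := hmono (Set.mem_Icc.2 ⟨le_refl 0, zero_le_one⟩) (Set.mem_Icc.2 ⟨hy.1, hy1⟩) hy.1
      rwa [h0] at this
    · -- antitone on [1, C]
      have hanti : AntitoneOn h (Set.Icc (1:ℝ) C) := by
        apply antitoneOn_of_hasDerivWithinAt_nonpos (convex_Icc 1 C) h_cont.continuousOn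
          (f' := fun x => Real.exp (x ^ 2 / 2) * (1 - x ^ 2))
        · intro x _; exact (h_hasDeriv x).hasDerivWithinAt
        · intro x hx
          rw [interior_Icc] at hx
          have : 1 ≤ x ^ 2 := by nlinarith [hx.1]
          have := Real.exp_pos (x ^ 2 / 2)
          nlinarith
      have := hanti (Set.mem_Icc.2 ⟨hy1, hy.2⟩) (Set.mem_Icc.2 ⟨hC1.le, le_refl C⟩) hy.2
      rwa [hC0] at this
  -- I C > 0
  have hIC : 0 < I C := by
    have : 2 * I C = C * Real.exp (C ^ 2 / 2) := by linarith [hCroot]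
    nlinarith [Real.exp_pos (C ^ 2 / 2), hCpos]
  -- g := I y / y^2 is antitone on (0, C]
  set g : ℝ → ℝ := fun u => I u / u ^ 2 with hg
  have hganti : AntitoneOn g (Set.Ioc (0:ℝ) C) := by
    apply antitoneOn_of_hasDerivWithinAt_nonpos (convex_Ioc 0 C)
      (f' := fun x => (Real.exp (x ^ 2 / 2) * x ^ 2 - I x * (2 * x)) / (x ^ 2) ^ 2)
    · apply ContinuousOn.div
      · exact (intervalIntegral.continuous_primitive
          (fun a b => cont_exp_sq.intervalIntegrable a b) 0).continuousOn
      · fun_prop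
      · intro x hx
        have : (0:ℝ) < x := hx.1
        positivity
    · intro x hx
      rw [interior_Ioc] at hx
      have hx0 : x ≠ 0 := ne_of_gt hx.1
      have hd : HasDerivAt g ((Real.exp (x ^ 2 / 2) * x ^ 2 - I x * (2 * x)) / (x ^ 2) ^ 2) x := by
        have hx2 : HasDerivAt (fun u : ℝ => u ^ 2) (2 * x) x := by
          simpa using (hasDerivAt_pow 2 x)
        exact (I_hasDeriv x).div hx2 (by positivity)
      exact hd.hasDerivWithinAt
    · intro x hx
      rw [interior_Ioc] at hx
      have hxpos : 0 < x := hx.1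
      have hhx : 0 ≤ h x := h_nonneg x ⟨hxpos.le, hx.2.le⟩
      have hnum : Real.exp (x ^ 2 / 2) * x ^ 2 - I x * (2 * x) = -(x * h x) := by
        simp only [hh]; ring
      rw [hnum]
      have : 0 ≤ x * h x := mul_nonneg hxpos.le hhx
      have hden : (0:ℝ) < (x ^ 2) ^ 2 := by positivity
      exact div_nonpos_of_nonpos_of_nonneg (by linarith) hden.le
  -- conclude
  intro y hy
  have hypos : 0 < y := hy.1
  have hyC : y ≤ C := hy.2
  have hgy : g C ≤ g y := hganti hy (Set.mem_Ioc.2 ⟨hCpos, le_refl C⟩) hyC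
  have key : y ^ 2 * I C ≤ C ^ 2 * I y := by
    rw [hg] at hgy
    simp only at hgy
    rw [div_le_div_iff₀ (by positivity) (by positivity)] at hgy
    nlinarith [hgy]
  rw [hf y, hB]
  rw [div_mul_eq_mul_div, div_mul_eq_mul_div, div_div,
    le_div_iff₀ (by positivity : (0:ℝ) < I C * y)]
  calc y * (I C * y) = y ^ 2 * I C := by ring
    _ ≤ C ^ 2 * I y := key
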